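/- arXiv:2208.09731 — 3 statements merged into one kernel-verified Lean document; each statement's English description precedes it below -/
import Mathlib

section
/- Let Z be a zero forcing set of A ∈ F^{n×n}, b ∈ F^n, and x' ∈ F^n with support contained in Z. If Ax = b for some x with x_Z = x'_Z, then x = Forcing(A, Z, b − Ax') + x', where Forcing is the forcing algorithm that produces the unique solution vanishing on Z of the system restricted along the forcing order. -/
open Matrix

section ZeroForcing

variable {V : Type*}

/-- The blue-coloring closure of the zero forcing process on a directed graph with
edge relation `E`, starting from the initially blue set `Z`:  a blue vertex `u` all of
whose out-neighbors except `v` are already blue forces `v` to become blue. -/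
inductive Blue (E : V → V → Prop) (Z : Set V) : V → Prop
  | init {v : V} : v ∈ Z → Blue E Z v
  | force {u v : V} : Blue E Z u → E u v →
      (∀ w, E u w → w ≠ v → Blue E Z w) → Blue E Z v

/-- `Z` is a zero forcing set if the forcing process colors every vertex blue. -/
def IsZeroForcingSet (E : V → V → Prop) (Z : Set V) : Prop := ∀ v, Blue E Z v

end ZeroForcing

section ForcingAlg

variable {F : Type*} [Field F] {n : ℕ}

/-- The off-diagonal adjacency pattern of a matrix: `u → v` iff `u ≠ v` and `A u v ≠ 0`. -/
def adjOf (A : Matrix (Fin n) (Fin n) F) (u v : Fin n) : Prop := u ≠ v ∧ A u v ≠ 0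

/-- A chronological list of forces for the zero forcing set `Z` of `A`:  `π` lists the
vertices outside `Z` in the order they are forced, and `par u` is the forcing parent of
`u` (the vertex that forces `u`). -/
structure ForcingOrder (A : Matrix (Fin n) (Fin n) F) (Z : Finset (Fin n)) where
  π : List (Fin n)
  par : Fin n → Fin n
  nodup : π.Nodup
  mem_iff : ∀ v, v ∈ π ↔ v ∉ Z
  par_ne_self : ∀ u ∈ π, par u ≠ u
  par_edge : ∀ u ∈ π, A (par u) u ≠ 0
  par_blue : ∀ u ∈ π, par u ∈ Z ∨ (par u ∈ π ∧ π.idxOf (par u) < π.idxOf u)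
  others_blue : ∀ u ∈ π, ∀ w, w ≠ par u → w ≠ u → A (par u) w ≠ 0 →
      (w ∈ Z ∨ (w ∈ π ∧ π.idxOf w < π.idxOf u))
  par_inj : ∀ u ∈ π, ∀ v ∈ π, par u = par v → u = v

/-- One step of the forcing algorithm: `x_u ← (b_{u↑} − A_{u↑,*} x) / A_{u↑,u}`. -/
def forcingStep (A : Matrix (Fin n) (Fin n) F) (par : Fin n → Fin n)
    (b : Fin n → F) (x : Fin n → F) (u : Fin n) : Fin n → F :=
  Function.update x u ((b (par u) - A (par u) ⬝ᵥ x) / A (par u) u)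

/-- The forcing algorithm `Forcing(A, Z, b)`: starting from `x = 0`, iterate the forcing
update over the vertices outside `Z` in forcing order. -/
def Forcing (A : Matrix (Fin n) (Fin n) F) {Z : Finset (Fin n)}
    (fo : ForcingOrder A Z) (b : Fin n → F) : Fin n → F :=
  fo.π.foldl (forcingStep A fo.par b) 0

/-- The map `R(b) = b − A · Forcing(A, Z, b)`. -/
def Rmap (A : Matrix (Fin n) (Fin n) F) {Z : Finset (Fin n)}
    (fo : ForcingOrder A Z) (b : Fin n → F) : Fin n → F :=
  b - A.mulVec (Forcing A fo b)

/-- A vertex is a terminal if it has no forcing child. -/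
def IsTerminal {A : Matrix (Fin n) (Fin n) F} {Z : Finset (Fin n)}
    (fo : ForcingOrder A Z) (v : Fin n) : Prop :=
  ∀ u ∈ fo.π, fo.par u ≠ v

instance {A : Matrix (Fin n) (Fin n) F} {Z : Finset (Fin n)} (fo : ForcingOrder A Z) :
    DecidablePred (IsTerminal fo) := fun v =>
  decidable_of_iff (∀ u ∈ fo.π, fo.par u ≠ v) Iff.rfl

/-- The core matrix `B = (R A)_{T,Z}`: its column indexed by `z ∈ Z` is `(R a_z)_T`,
where `a_z` is the `z`-th column of `A` and `T` is the terminal set. -/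
def coreMatrix (A : Matrix (Fin n) (Fin n) F) {Z : Finset (Fin n)}
    (fo : ForcingOrder A Z) :
    Matrix {v // IsTerminal fo v} {v // v ∈ Z} F :=
  Matrix.of fun t z => Rmap A fo (fun i => A i z.1) t.1

end ForcingAlg

section helpers
variable {F : Type*} [Field F] {n : ℕ}

private lemma mem_take_of_indexOf_lt {α : Type*} [DecidableEq α] {l : List α} {w : α} {k : ℕ}
    (hw : w ∈ l) (h : l.idxOf w < k) : w ∈ l.take k := by
  have h1 : l.idxOf w < l.length := List.idxOf_lt_length_iff.2 hw
  have h2 : l.idxOf w < (l.take k).length := by simp [List.length_take]; omega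
  have : (l.take k)[l.idxOf w] = w := by
    rw [List.getElem_take]; exact List.getElem_idxOf h1
  exact this ▸ List.getElem_mem h2

private lemma indexOf_getElem' {α : Type*} [DecidableEq α] {l : List α} (h : l.Nodup)
    {k : ℕ} (hk : k < l.length) : l.idxOf l[k] = k := by
  have hm : l[k] ∈ l := List.getElem_mem hk
  have h1 : l.idxOf l[k] < l.length := List.idxOf_lt_length_iff.2 hm
  exact (List.Nodup.getElem_inj_iff h).1 (List.getElem_idxOf h1)

/-- Key correctness of the forcing algorithm. -/
private lemma forcing_eq {A : Matrix (Fin n) (Fin n) F} {Z : Finset (Fin n)}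
    (fo : ForcingOrder A Z) {c y : Fin n → F} (hAy : A.mulVec y = c)
    (hyZ : ∀ i ∈ Z, y i = 0) : Forcing A fo c = y := by
  have key : ∀ k, ∀ v, (fo.π.take k).foldl (forcingStep A fo.par c) 0 v
      = if v ∈ fo.π.take k then y v else 0 := by
    intro k
    induction k with
    | zero => intro v; simp
    | succ k ih =>
      by_cases hk : k < fo.π.length
      · have htake : fo.π.take (k+1) = fo.π.take k ++ [fo.π[k]] := by
          rw [List.take_succ, List.getElem?_eq_getElem hk]; rfl
        set u := fo.π[k] with hu
        have hum : u ∈ fo.π := List.getElem_mem hk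
        have hidx : fo.π.idxOf u = k := indexOf_getElem' fo.nodup hk
        have hunot : u ∉ fo.π.take k := by
          intro hm
          obtain ⟨i, hi, hiu⟩ := List.getElem_of_mem hm
          have hik : i < k := lt_of_lt_of_le hi (by simp [List.length_take])
          rw [List.getElem_take] at hiu
          have := (List.Nodup.getElem_inj_iff fo.nodup).1 (hiu.trans hu)
          omega
        -- the state after k steps, as a function
        have hstate : (fo.π.take k).foldl (forcingStep A fo.par c) 0
            = fun w => if w ∈ fo.π.take k then y w else 0 := funext ih
        -- blue vertices (other than u) agree with y in the current state
        have hblue : ∀ w, w ≠ u → A (fo.par u) w ≠ 0 →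
            (if w ∈ fo.π.take k then y w else 0) = y w := by
          intro w hwu hAw
          have hcase : w ∈ Z ∨ (w ∈ fo.π ∧ fo.π.idxOf w < k) := by
            by_cases hwp : w = fo.par u
            · rcases fo.par_blue u hum with h | ⟨h1, h2⟩
              · exact Or.inl (hwp ▸ h)
              · exact Or.inr ⟨hwp ▸ h1, by rw [hwp, ← hidx]; exact hwp ▸ h2⟩
            · rcases fo.others_blue u hum w hwp hwu hAw with h | ⟨h1, h2⟩
              · exact Or.inl h
              · exact Or.inr ⟨h1, hidx ▸ h2⟩
          rcases hcase with h | ⟨h1, h2⟩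
          · have : w ∉ fo.π := fun hm => (fo.mem_iff w).1 hm h
            rw [if_neg (fun hm => this (List.mem_of_mem_take hm)), hyZ w h]
          · rw [if_pos (mem_take_of_indexOf_lt h1 h2)]
        -- the dot product computation
        have hdot : A (fo.par u) ⬝ᵥ (fun w => if w ∈ fo.π.take k then y w else 0)
            = c (fo.par u) - A (fo.par u) u * y u := by
          have hc : c (fo.par u) = ∑ w, A (fo.par u) w * y w := by
            rw [← hAy]; rfl
          have hterm : ∀ w, A (fo.par u) w * (if w ∈ fo.π.take k then y w else 0)
              = A (fo.par u) w * y w - (if w = u then A (fo.par u) u * y u else 0) := by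
            intro w
            by_cases hwu : w = u
            · subst hwu; rw [if_pos rfl, if_neg hunot]; ring
            · rw [if_neg hwu]
              by_cases hAw : A (fo.par u) w = 0
              · simp [hAw]
              · rw [hblue w hwu hAw]; ring
          rw [dotProduct, hc, Finset.sum_congr rfl (fun w _ => hterm w),
            Finset.sum_sub_distrib, Finset.sum_ite_eq' Finset.univ u
              (fun _ => A (fo.par u) u * y u), if_pos (Finset.mem_univ u)]
        intro v
        rw [htake, List.foldl_append]
        simp only [List.foldl_cons, List.foldl_nil]
        rw [hstate]
        unfold forcingStep
        rw [hdot]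
        by_cases hvu : v = u
        · rw [hvu, Function.update_self, if_pos (by simp), sub_sub_cancel,
            mul_div_cancel_left₀ _ (fo.par_edge u hum)]
        · rw [Function.update_of_ne hvu]
          have : (v ∈ fo.π.take k ++ [u]) ↔ v ∈ fo.π.take k := by
            simp [hvu]
          rw [if_congr this rfl rfl]
      · intro v
        have h2 : fo.π.take (k+1) = fo.π.take k := by
          rw [List.take_of_length_le (by omega), List.take_of_length_le (by omega)]
        rw [h2]; exact ih v
  funext v
  have hfin := key fo.π.length v
  rw [List.take_length] at hfin
  rw [Forcing] at *
  rw [hfin]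
  by_cases hv : v ∈ fo.π
  · rw [if_pos hv]
  · rw [if_neg hv]
    exact (hyZ v (by by_contra h; exact hv ((fo.mem_iff v).2 h))).symm
end helpers


/-- if `supp(x') ⊆ Z` and `A x = b` for some `x` with `x_Z = x'_Z`,
then `x = Forcing(A, Z, b − A x') + x'`. -/
theorem stmt4 {F : Type*} [Field F] {n : ℕ} (A : Matrix (Fin n) (Fin n) F)
    (Z : Finset (Fin n)) (hZ : IsZeroForcingSet (adjOf A) ↑Z)
    (fo : ForcingOrder A Z) (b : Fin n → F)
    (x' : Fin n → F) (hsupp : ∀ i ∉ Z, x' i = 0)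
    (x : Fin n → F) (hx : A.mulVec x = b) (hagree : ∀ i ∈ Z, x i = x' i) :
    x = Forcing A fo (b - A.mulVec x') + x' := by
  have hAy : A.mulVec (x - x') = b - A.mulVec x' := by
    rw [Matrix.mulVec_sub, hx]
  have hyZ : ∀ i ∈ Z, (x - x') i = 0 := by
    intro i hi; simp [hagree i hi]
  rw [forcing_eq fo hAy hyZ]
  simp
end

section
/- Let Z be a zero forcing set of A ∈ F^{n×n} with terminal set T, |T| = |Z| = k. Define the core matrix B ∈ F^{T×Z} by B = (R A)_{T,Z}, where R(b) = b − A·Forcing(A,Z,b). Suppose Ax = b has at least one solution. Then for every y ∈ F^Z with B y = (R b)_T, there exists x ∈ F^n with Ax = b and x_Z = y. -/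
open Matrix

section Aux

variable {F : Type*} [Field F] {n : ℕ}

lemma dot_update (w x : Fin n → F) (u : Fin n) (c : F) :
    w ⬝ᵥ (Function.update x u c) = w ⬝ᵥ x + w u * (c - x u) := by
  have h : Function.update x u c = x + Pi.single u (c - x u) := by
    funext j
    by_cases hj : j = u
    · subst hj; simp
    · simp [Function.update_of_ne hj, Pi.single_apply, hj]
  rw [h, dotProduct_add, dotProduct_single]

lemma foldl_step_not_mem (A : Matrix (Fin n) (Fin n) F) (par : Fin n → Fin n)
    (b : Fin n → F) (l : List (Fin n)) (x : Fin n → F) (v : Fin n) (hv : v ∉ l) :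
    (l.foldl (forcingStep A par b) x) v = x v := by
  induction l generalizing x with
  | nil => rfl
  | cons u l ih =>
    simp only [List.mem_cons, not_or] at hv
    rw [List.foldl_cons, ih _ hv.2, forcingStep, Function.update_of_ne hv.1]

lemma foldl_step_add (A : Matrix (Fin n) (Fin n) F) (par : Fin n → Fin n)
    (b1 b2 : Fin n → F) (l : List (Fin n)) (x1 x2 : Fin n → F) :
    l.foldl (forcingStep A par (b1 + b2)) (x1 + x2)
      = l.foldl (forcingStep A par b1) x1 + l.foldl (forcingStep A par b2) x2 := by
  induction l generalizing x1 x2 with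
  | nil => rfl
  | cons u l ih =>
    rw [List.foldl_cons, List.foldl_cons, List.foldl_cons, ← ih]
    congr 1
    funext j
    by_cases hj : j = u
    · subst hj
      simp only [forcingStep, Pi.add_apply, Function.update_self, dotProduct_add]
      rw [← add_div]
      ring_nf
    · simp [forcingStep, Function.update_of_ne hj]

lemma foldl_step_smul (A : Matrix (Fin n) (Fin n) F) (par : Fin n → Fin n)
    (b : Fin n → F) (c : F) (l : List (Fin n)) (x : Fin n → F) :
    l.foldl (forcingStep A par (c • b)) (c • x)
      = c • l.foldl (forcingStep A par b) x := by
  induction l generalizing x with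
  | nil => rfl
  | cons u l ih =>
    rw [List.foldl_cons, List.foldl_cons, ← ih]
    congr 1
    funext j
    by_cases hj : j = u
    · subst hj
      simp only [forcingStep, Pi.smul_apply, Function.update_self, smul_eq_mul]
      rw [dotProduct_smul, smul_eq_mul]
      ring_nf
    · simp [forcingStep, Function.update_of_ne hj]

lemma Forcing_add (A : Matrix (Fin n) (Fin n) F) {Z : Finset (Fin n)}
    (fo : ForcingOrder A Z) (b1 b2 : Fin n → F) :
    Forcing A fo (b1 + b2) = Forcing A fo b1 + Forcing A fo b2 := by
  have := foldl_step_add A fo.par b1 b2 fo.π 0 0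
  simpa [Forcing] using this

lemma Forcing_smul (A : Matrix (Fin n) (Fin n) F) {Z : Finset (Fin n)}
    (fo : ForcingOrder A Z) (c : F) (b : Fin n → F) :
    Forcing A fo (c • b) = c • Forcing A fo b := by
  have := foldl_step_smul A fo.par b c fo.π 0
  simpa [Forcing] using this

/-- `Rmap` as a linear map. -/
def RmapL (A : Matrix (Fin n) (Fin n) F) {Z : Finset (Fin n)}
    (fo : ForcingOrder A Z) : (Fin n → F) →ₗ[F] (Fin n → F) where
  toFun := Rmap A fo
  map_add' b1 b2 := by
    simp only [Rmap, Forcing_add, Matrix.mulVec_add]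
    abel
  map_smul' c b := by
    simp only [Rmap, Forcing_smul, Matrix.mulVec_smul, RingHom.id_apply, smul_sub]

lemma dot_foldl_const (A : Matrix (Fin n) (Fin n) F) (par : Fin n → Fin n)
    (b : Fin n → F) (p : Fin n) (l : List (Fin n)) (hl : ∀ w ∈ l, A p w = 0)
    (x : Fin n → F) : A p ⬝ᵥ (l.foldl (forcingStep A par b) x) = A p ⬝ᵥ x := by
  induction l generalizing x with
  | nil => rfl
  | cons u l ih =>
    rw [List.foldl_cons, ih (fun w hw => hl w (List.mem_cons_of_mem _ hw)),
      forcingStep, dot_update, hl u List.mem_cons_self, zero_mul, add_zero]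

lemma Rmap_parent (A : Matrix (Fin n) (Fin n) F) {Z : Finset (Fin n)}
    (fo : ForcingOrder A Z) (b : Fin n → F) (u : Fin n) (hu : u ∈ fo.π) :
    Rmap A fo b (fo.par u) = 0 := by
  obtain ⟨l1, l2, hsplit⟩ := List.append_of_mem hu
  have hnd : (l1 ++ u :: l2).Nodup := hsplit ▸ fo.nodup
  obtain ⟨hnd1, hnd2, hdisj⟩ := List.nodup_append.mp hnd
  have hu1 : u ∉ l1 := fun h => hdisj u h u List.mem_cons_self rfl
  have hu2 : u ∉ l2 := (List.nodup_cons.mp hnd2).1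
  set p := fo.par u with hp
  set x1 : Fin n → F := l1.foldl (forcingStep A fo.par b) 0 with hx1
  have hx1u : x1 u = 0 := foldl_step_not_mem A fo.par b l1 0 u hu1
  -- after the step at u, the dot product equals b p
  have hstep : A p ⬝ᵥ (forcingStep A fo.par b x1 u) = b p := by
    rw [forcingStep, dot_update, hx1u, sub_zero,
      mul_div_cancel₀ _ (fo.par_edge u hu)]
    ring
  -- for w ∈ l2, A p w = 0
  have hzero : ∀ w ∈ l2, A p w = 0 := by
    intro w hw
    by_contra hne
    have hwπ : w ∈ fo.π := hsplit ▸ List.mem_append_right _ (List.mem_cons_of_mem _ hw)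
    have hwZ : w ∉ Z := (fo.mem_iff w).mp hwπ
    have hwu : w ≠ u := fun h => hu2 (h ▸ hw)
    have hidx : fo.π.idxOf u < fo.π.idxOf w := by
      have hw1 : w ∉ l1 := fun h => hdisj w h w (List.mem_cons_of_mem _ hw) rfl
      rw [hsplit, List.idxOf_append_of_notMem hu1, List.idxOf_append_of_notMem hw1,
        List.idxOf_cons_self, List.idxOf_cons_ne _ (Ne.symm hwu)]
      omega
    have hwp : w ≠ p := by
      intro h
      rcases fo.par_blue u hu with h1 | h1
      · exact hwZ (h ▸ hp ▸ h1)
      · have := h ▸ hp ▸ h1.2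
        omega
    rcases fo.others_blue u hu w hwp hwu hne with h1 | h1
    · exact hwZ h1
    · omega
  have : A p ⬝ᵥ Forcing A fo b = b p := by
    rw [Forcing, hsplit, List.foldl_append, List.foldl_cons, ← hx1,
      dot_foldl_const A fo.par b p l2 hzero, hstep]
  simp [Rmap, Matrix.mulVec, this]

lemma Forcing_mem_Z (A : Matrix (Fin n) (Fin n) F) {Z : Finset (Fin n)}
    (fo : ForcingOrder A Z) (b : Fin n → F) (i : Fin n) (hi : i ∈ Z) :
    Forcing A fo b i = 0 := by
  have : i ∉ fo.π := fun h => (fo.mem_iff i).mp h hi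
  simpa [Forcing] using foldl_step_not_mem A fo.par b fo.π 0 i this

end Aux

/-- if `A x = b` has a solution, then every solution `y` of
`B y = (R b)_T`, where `B` is the core matrix, lifts to a solution `x` of `A x = b`
with `x_Z = y`. -/
theorem stmt11 {F : Type*} [Field F] {n : ℕ} (A : Matrix (Fin n) (Fin n) F)
    (Z : Finset (Fin n)) (hZ : IsZeroForcingSet (adjOf A) ↑Z)
    (fo : ForcingOrder A Z) (b : Fin n → F)
    (hsol : ∃ x, A.mulVec x = b)
    (y : {v // v ∈ Z} → F)
    (hy : (coreMatrix A fo).mulVec y = fun t => Rmap A fo b t.1) :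
    ∃ x : Fin n → F, A.mulVec x = b ∧ ∀ (i : Fin n) (h : i ∈ Z), x i = y ⟨i, h⟩ := by
  classical
  set e : Fin n → F := fun i => if h : i ∈ Z then y ⟨i, h⟩ else 0 with he
  set c : Fin n → F := b - A.mulVec e with hc
  refine ⟨e + Forcing A fo c, ?_, ?_⟩
  · -- A x = b iff Rmap c = 0
    have hAe : A.mulVec e = ∑ z : {v // v ∈ Z}, y z • (fun i => A i z.1) := by
      funext i
      simp only [Matrix.mulVec, dotProduct, Finset.sum_apply, Pi.smul_apply, smul_eq_mul]
      rw [← Finset.sum_subset (Finset.subset_univ Z)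
        (fun j _ hj => by simp [he, dif_neg hj])]
      rw [← Finset.sum_attach Z (fun j => A i j * e j)]
      refine Finset.sum_congr rfl fun z _ => ?_
      simp [he, dif_pos z.2, mul_comm]
    have hRc : Rmap A fo c = 0 := by
      funext v
      by_cases ht : IsTerminal fo v
      · have hlin : Rmap A fo c = Rmap A fo b - Rmap A fo (A.mulVec e) :=
          map_sub (RmapL A fo) b (A.mulVec e)
        have hsum : Rmap A fo (A.mulVec e) v
            = ∑ z : {v // v ∈ Z}, y z * Rmap A fo (fun i => A i z.1) v := by
          rw [hAe, show Rmap A fo = RmapL A fo from rfl, map_sum]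
          simp only [Finset.sum_apply, _root_.map_smul, Pi.smul_apply, smul_eq_mul]
        have hyv := congrFun hy ⟨v, ht⟩
        simp only [Matrix.mulVec, dotProduct, coreMatrix, Matrix.of_apply] at hyv
        rw [hlin, Pi.sub_apply, hsum, Pi.zero_apply, sub_eq_zero, ← hyv]
        exact Finset.sum_congr rfl fun z _ => mul_comm _ _
      · unfold IsTerminal at ht
        push_neg at ht
        obtain ⟨u, hu, hpu⟩ := ht
        exact hpu ▸ Rmap_parent A fo c u hu
    have : A.mulVec (Forcing A fo c) = c := by
      have := hRc
      simp only [Rmap, sub_eq_zero] at this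
      exact this.symm
    rw [Matrix.mulVec_add, this, hc]
    abel
  · intro i hi
    simp [he, Forcing_mem_Z A fo c i hi, dif_pos hi]
end

section
/- Let Z be a zero forcing set of A ∈ F^{n×n}. Then every x ∈ ker(A) is uniquely determined by its restriction x_Z; consequently dim ker(A) ≤ |Z|, i.e., the nullity of A is at most the zero forcing number of its graph. -/
open Matrix

lemma blue_zero {F : Type*} [Field F] {n : ℕ} (A : Matrix (Fin n) (Fin n) F)
    (Z : Set (Fin n)) (x : Fin n → F) (hx : A.mulVec x = 0)
    (hZ0 : ∀ i ∈ Z, x i = 0) : ∀ v, Blue (adjOf A) Z v → x v = 0 := by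
  intro v hv
  induction hv with
  | init h => exact hZ0 _ h
  | @force u v hu he hall ihu ihall =>
    have hsum : ∑ w, A u w * x w = 0 := by
      have := congrFun hx u
      simpa [Matrix.mulVec, dotProduct] using this
    have hkey : A u v * x v = 0 := by
      rw [← hsum]
      symm
      apply Finset.sum_eq_single
      · intro w _ hwv
        by_cases hAw : A u w = 0
        · simp [hAw]
        · by_cases hwu : w = u
          · subst hwu; simp [ihu]
          · have : x w = 0 := ihall w ⟨Ne.symm hwu, hAw⟩ hwv
            simp [this]
      · intro h; exact absurd (Finset.mem_univ v) h
    have hAuv : A u v ≠ 0 := he.2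
    exact (mul_eq_zero.mp hkey).resolve_left hAuv

/-- every kernel vector of `A` is uniquely determined by its restriction
to a zero forcing set `Z`; consequently the nullity of `A` is at most `|Z|`. -/
theorem stmt18 {F : Type*} [Field F] {n : ℕ} (A : Matrix (Fin n) (Fin n) F)
    (Z : Finset (Fin n)) (hZ : IsZeroForcingSet (adjOf A) ↑Z) :
    (∀ x y : Fin n → F, A.mulVec x = 0 → A.mulVec y = 0 →
      (∀ i ∈ Z, x i = y i) → x = y) ∧
    Module.finrank F (LinearMap.ker A.mulVecLin) ≤ Z.card := by
  have key : ∀ x : Fin n → F, A.mulVec x = 0 → (∀ i ∈ Z, x i = 0) → x = 0 := by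
    intro x hx h0
    funext v
    exact blue_zero A ↑Z x hx h0 v (hZ v)
  have inj : ∀ x y : Fin n → F, A.mulVec x = 0 → A.mulVec y = 0 →
      (∀ i ∈ Z, x i = y i) → x = y := by
    intro x y hx hy hxy
    have : x - y = 0 := by
      apply key
      · simp [Matrix.mulVec_sub, hx, hy]
      · intro i hi; simp [hxy i hi]
    exact sub_eq_zero.mp this
  refine ⟨inj, ?_⟩
  let f : LinearMap.ker A.mulVecLin →ₗ[F] ({v // v ∈ Z} → F) :=
    { toFun := fun x i => x.1 i.1
      map_add' := fun x y => rfl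
      map_smul' := fun c x => rfl }
  have hf : Function.Injective f := by
    intro x y hxy
    ext v
    have := inj x.1 y.1 x.2 y.2 (fun i hi => congrFun hxy ⟨i, hi⟩)
    exact congrFun this v
  calc Module.finrank F (LinearMap.ker A.mulVecLin)
      ≤ Module.finrank F ({v // v ∈ Z} → F) :=
        LinearMap.finrank_le_finrank_of_injective hf
    _ = Z.card := by simp [Module.finrank_pi]
end
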